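/- Let A be a λ-lattice with a surjective unary operation ' satisfying identities (C1) and (C2), and assume the Sasaki operations x ⊙ y := (x ⊔ y') ⊓ y and x → y := x' ⊔ (x ⊓ y) form an adjoint pair with respect to the induced order. Then ⊔ and ⊓ are monotone with respect to the induced order (for all a,b,c with a ≤ b one has a ⊔ c ≤ b ⊔ c and a ⊓ c ≤ b ⊓ c), and hence A is a lattice: a ⊔ b is the least upper bound and a ⊓ b is the greatest lower bound of a and b with respect to the induced order. -/
import Mathlib


/-- A λ-lattice: two commutative binary operations satisfying the weak
associativity laws and the absorption laws. -/
structure LambdaLattice (A : Type*) where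
  sup : A → A → A
  inf : A → A → A
  sup_comm : ∀ x y, sup x y = sup y x
  inf_comm : ∀ x y, inf x y = inf y x
  sup_assoc : ∀ x y z, sup x (sup (sup x y) z) = sup (sup x y) z
  inf_assoc : ∀ x y z, inf x (inf (inf x y) z) = inf (inf x y) z
  absorb_sup : ∀ x y, sup x (inf x y) = x
  absorb_inf : ∀ x y, inf x (sup x y) = x

/-- The induced order of a λ-lattice: `x ≤ y` iff `x ⊔ y = y`. -/
def LambdaLattice.le {A : Type*} (L : LambdaLattice A) (x y : A) : Prop :=
  L.sup x y = y

namespace LambdaLattice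

variable {A : Type*} (L : LambdaLattice A)

lemma sup_idem' (x : A) : L.sup x x = x := by
  nth_rewrite 2 [show x = L.inf x (L.sup x x) from (L.absorb_inf x x).symm]
  rw [L.absorb_sup]

lemma inf_idem' (x : A) : L.inf x x = x := by
  nth_rewrite 2 [show x = L.sup x (L.inf x x) from (L.absorb_sup x x).symm]
  rw [L.absorb_inf]

lemma le_trans' {x y z : A} (h1 : L.le x y) (h2 : L.le y z) : L.le x z := by
  unfold LambdaLattice.le at *
  calc L.sup x z = L.sup x (L.sup y z) := by rw [h2]
    _ = L.sup x (L.sup (L.sup x y) z) := by rw [h1]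
    _ = L.sup (L.sup x y) z := L.sup_assoc x y z
    _ = L.sup y z := by rw [h1]
    _ = z := h2

lemma sup_sup' (x y : A) : L.sup x (L.sup x y) = L.sup x y := by
  have h := L.sup_assoc x y (L.inf (L.sup x y) x)
  rw [L.absorb_sup (L.sup x y) x] at h
  exact h

lemma inf_inf' (x y : A) : L.inf x (L.inf x y) = L.inf x y := by
  have h := L.inf_assoc x y (L.inf x y)
  rw [L.inf_idem' (L.inf x y)] at h
  exact h

lemma le_sup_left' (a b : A) : L.le a (L.sup a b) := L.sup_sup' a b

lemma le_sup_right' (a b : A) : L.le b (L.sup a b) := by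
  show L.sup b (L.sup a b) = L.sup a b
  rw [L.sup_comm a b, L.sup_sup']

lemma inf_le_left' (a b : A) : L.le (L.inf a b) a := by
  show L.sup (L.inf a b) a = a
  rw [L.sup_comm, L.absorb_sup]

lemma inf_le_right' (a b : A) : L.le (L.inf a b) b := by
  show L.sup (L.inf a b) b = b
  rw [L.inf_comm, L.sup_comm, L.absorb_sup]

lemma inf_of_le' {x y : A} (h : L.le x y) : L.inf x y = x := by
  rw [show y = L.sup x y from h.symm, L.absorb_inf]

lemma le_of_inf' {x y : A} (h : L.inf x y = x) : L.le x y := by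
  show L.sup x y = y
  conv_lhs => rw [← h, L.inf_comm, L.sup_comm, L.absorb_sup]

end LambdaLattice

/-- Let `A` be a λ-lattice with a surjective unary operation `c`
satisfying identities (C1) and (C2) whose Sasaki operations form an adjoint pair
with respect to the induced order. Then `⊔` and `⊓` are monotone with respect
to the induced order, and hence `A` is a lattice: `a ⊔ b` is the least upper
bound and `a ⊓ b` is the greatest lower bound of `a` and `b`. -/
theorem sasaki_stmt_17 {A : Type*} (L : LambdaLattice A) (c : A → A)
    (hsurj : Function.Surjective c)
    (C1 : ∀ x y : A, L.sup (c y) (L.inf (L.sup x (c y)) y) = L.sup x (c y))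
    (C2 : ∀ x y : A, L.inf (L.sup (c x) (L.inf x y)) x = L.inf x y)
    (adj : ∀ x y z : A, L.le (L.inf (L.sup x (c y)) y) z ↔ L.le x (L.sup (c y) (L.inf y z))) :
    (∀ a b c' : A, L.le a b → L.le (L.sup a c') (L.sup b c') ∧ L.le (L.inf a c') (L.inf b c')) ∧
    (∀ a b : A, L.le a (L.sup a b) ∧ L.le b (L.sup a b) ∧
      ∀ u : A, L.le a u → L.le b u → L.le (L.sup a b) u) ∧
    (∀ a b : A, L.le (L.inf a b) a ∧ L.le (L.inf a b) b ∧
      ∀ u : A, L.le u a → L.le u b → L.le u (L.inf a b)) := by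
  -- monotonicity of inf (using C2 and adjointness)
  have mono_inf : ∀ a b d : A, L.le a b → L.le (L.inf d a) (L.inf d b) := by
    intro a b d h
    -- key rewriting from C2
    have hC2 : L.inf (L.sup (L.inf d a) (c d)) d = L.inf d a := by
      rw [L.sup_comm]; exact C2 d a
    have h1 : L.le (L.inf d a) b := L.le_trans' (L.inf_le_right' d a) h
    have h2 : L.le (L.inf d a) (L.sup (c d) (L.inf d b)) := by
      have := (adj (L.inf d a) d b).mp (by rw [hC2]; exact h1)
      exact this
    have h3 := (adj (L.inf d a) d (L.inf d b)).mpr (by rw [L.inf_inf' d b]; exact h2)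
    rw [hC2] at h3
    exact h3
  -- monotonicity of sup (using C1, surjectivity, and adjointness)
  have mono_sup : ∀ a b d : A, L.le a b → L.le (L.sup a d) (L.sup b d) := by
    intro a b d h
    obtain ⟨q, hq⟩ := hsurj d
    have hC1b : L.sup d (L.inf (L.sup b d) q) = L.sup b d := by
      conv_lhs => rw [← hq]
      conv_rhs => rw [← hq]
      exact C1 b q
    have hab : L.le a (L.sup b d) := L.le_trans' h (L.le_sup_left' b d)
    -- first adjointness application: (a ⊔ d) ⊓ q ≤ b ⊔ d
    have h2 : L.le (L.inf (L.sup a d) q) (L.sup b d) := by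
      have := (adj a q (L.sup b d)).mpr (by
        rw [hq, L.inf_comm q (L.sup b d), hC1b]; exact hab)
      rw [hq] at this
      exact this
    -- second adjointness application, with x = a ⊔ d
    have hadd : L.sup (L.sup a d) d = L.sup a d := by
      rw [L.sup_comm (L.sup a d) d, L.sup_comm a d, L.sup_sup']
    have h3 := (adj (L.sup a d) q (L.sup b d)).mp (by rw [hq, hadd]; exact h2)
    rw [hq, L.inf_comm q (L.sup b d), hC1b] at h3
    exact h3
  refine ⟨?_, ?_, ?_⟩
  · intro a b c' h
    refine ⟨mono_sup a b c' h, ?_⟩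
    have := mono_inf a b c' h
    rwa [L.inf_comm c' a, L.inf_comm c' b] at this
  · intro a b
    refine ⟨L.le_sup_left' a b, L.le_sup_right' a b, ?_⟩
    intro u ha hb
    have h1 : L.le (L.sup a b) (L.sup u b) := mono_sup a u b ha
    have h2 : L.sup u b = u := by rw [L.sup_comm]; exact hb
    rwa [h2] at h1
  · intro a b
    refine ⟨L.inf_le_left' a b, L.inf_le_right' a b, ?_⟩
    intro u ha hb
    have h1 : L.le (L.inf u b) (L.inf a b) := by
      have := mono_inf u a b ha
      rwa [L.inf_comm b u, L.inf_comm b a] at this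
    have h2 : L.inf u b = u := L.inf_of_le' hb
    rwa [h2] at h1
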